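/- The second-moment matrix of (X, W̃_1, W̃_2, W'_2, Δ) equals the second-moment matrix of (X, U1, U2, U'2, U2 − b*6·U'2); in particular E[X·W̃_i] = σ², E[W̃_1²] = σ² + s0 + s1, E[W̃_2²] = σ² + s0 + s2, E[W̃_1·W̃_2] = σ² + s0 − σT1·σT2, E[W'_2²] = σ² + s0 + s2 + s3, E[W'_2·W̃_1] = σ² + s0 − σT1·σT2, and E[W'_2·W̃_2] = σ² + s0 + s2. -/

import Mathlib

open MeasureTheory ProbabilityTheory

lemma qsplit_mul_integrable {Ω : Type*} [MeasurableSpace Ω] {μ : Measure Ω}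
    {f g : Ω → ℝ} (hf : MemLp f 2 μ) (hg : MemLp g 2 μ) :
    Integrable (fun ω => f ω * g ω) μ := by
  refine (hf.integrable_sq.add hg.integrable_sq).mono'
    (hf.aestronglyMeasurable.mul hg.aestronglyMeasurable) ?_
  filter_upwards with ω
  simp only [Pi.add_apply]
  rw [Real.norm_eq_abs, abs_mul]
  nlinarith [sq_nonneg (|f ω| - |g ω|), sq_abs (f ω), sq_abs (g ω),
    abs_nonneg (f ω), abs_nonneg (g ω), mul_nonneg (abs_nonneg (f ω)) (abs_nonneg (g ω))]

lemma qsplit_moment4 {Ω : Type*} [MeasurableSpace Ω] {μ : Measure Ω}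
    {X N1 N2 N3 : Ω → ℝ}
    (hX2 : MemLp X 2 μ) (hN12 : MemLp N1 2 μ) (hN22 : MemLp N2 2 μ) (hN32 : MemLp N3 2 μ)
    {mX m1 m2 m3 : ℝ}
    (hmX : ∫ ω, X ω ^ 2 ∂μ = mX) (hm1 : ∫ ω, N1 ω ^ 2 ∂μ = m1)
    (hm2 : ∫ ω, N2 ω ^ 2 ∂μ = m2) (hm3 : ∫ ω, N3 ω ^ 2 ∂μ = m3)
    (h01 : ∫ ω, X ω * N1 ω ∂μ = 0) (h02 : ∫ ω, X ω * N2 ω ∂μ = 0)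
    (h03 : ∫ ω, X ω * N3 ω ∂μ = 0) (h12 : ∫ ω, N1 ω * N2 ω ∂μ = 0)
    (h13 : ∫ ω, N1 ω * N3 ω ∂μ = 0) (h23 : ∫ ω, N2 ω * N3 ω ∂μ = 0)
    (a b c d a' b' c' d' : ℝ) :
    ∫ ω, (a * X ω + b * N1 ω + c * N2 ω + d * N3 ω)
        * (a' * X ω + b' * N1 ω + c' * N2 ω + d' * N3 ω) ∂μ
      = a * a' * mX + b * b' * m1 + c * c' * m2 + d * d' * m3 := by
  have iXX := hX2.integrable_sq
  have i11 := hN12.integrable_sq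
  have i22 := hN22.integrable_sq
  have i33 := hN32.integrable_sq
  have i01 := qsplit_mul_integrable hX2 hN12
  have i02 := qsplit_mul_integrable hX2 hN22
  have i03 := qsplit_mul_integrable hX2 hN32
  have i12 := qsplit_mul_integrable hN12 hN22
  have i13 := qsplit_mul_integrable hN12 hN32
  have i23 := qsplit_mul_integrable hN22 hN32
  have key : (fun ω => (a * X ω + b * N1 ω + c * N2 ω + d * N3 ω)
        * (a' * X ω + b' * N1 ω + c' * N2 ω + d' * N3 ω))
      = fun ω => ((a*a' * X ω ^ 2 + b*b' * N1 ω ^ 2) + (c*c' * N2 ω ^ 2 + d*d' * N3 ω ^ 2))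
        + ((((a*b'+a'*b) * (X ω * N1 ω) + (a*c'+a'*c) * (X ω * N2 ω))
            + ((a*d'+a'*d) * (X ω * N3 ω) + (b*c'+b'*c) * (N1 ω * N2 ω)))
          + ((b*d'+b'*d) * (N1 ω * N3 ω) + (c*d'+c'*d) * (N2 ω * N3 ω))) := by
    funext ω; ring
  have jXX : Integrable (fun ω => a*a' * X ω ^ 2) μ := iXX.const_mul _
  have j11 : Integrable (fun ω => b*b' * N1 ω ^ 2) μ := i11.const_mul _
  have j22 : Integrable (fun ω => c*c' * N2 ω ^ 2) μ := i22.const_mul _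
  have j33 : Integrable (fun ω => d*d' * N3 ω ^ 2) μ := i33.const_mul _
  have j01 : Integrable (fun ω => (a*b'+a'*b) * (X ω * N1 ω)) μ := i01.const_mul _
  have j02 : Integrable (fun ω => (a*c'+a'*c) * (X ω * N2 ω)) μ := i02.const_mul _
  have j03 : Integrable (fun ω => (a*d'+a'*d) * (X ω * N3 ω)) μ := i03.const_mul _
  have j12 : Integrable (fun ω => (b*c'+b'*c) * (N1 ω * N2 ω)) μ := i12.const_mul _
  have j13 : Integrable (fun ω => (b*d'+b'*d) * (N1 ω * N3 ω)) μ := i13.const_mul _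
  have j23 : Integrable (fun ω => (c*d'+c'*d) * (N2 ω * N3 ω)) μ := i23.const_mul _
  have kA1 : Integrable (fun ω => a*a' * X ω ^ 2 + b*b' * N1 ω ^ 2) μ := jXX.add j11
  have kA2 : Integrable (fun ω => c*c' * N2 ω ^ 2 + d*d' * N3 ω ^ 2) μ := j22.add j33
  have kA : Integrable (fun ω => (a*a' * X ω ^ 2 + b*b' * N1 ω ^ 2)
      + (c*c' * N2 ω ^ 2 + d*d' * N3 ω ^ 2)) μ := kA1.add kA2
  have kB1 : Integrable (fun ω => (a*b'+a'*b) * (X ω * N1 ω) + (a*c'+a'*c) * (X ω * N2 ω)) μ :=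
    j01.add j02
  have kB2 : Integrable (fun ω => (a*d'+a'*d) * (X ω * N3 ω) + (b*c'+b'*c) * (N1 ω * N2 ω)) μ :=
    j03.add j12
  have kB3 : Integrable (fun ω => ((a*b'+a'*b) * (X ω * N1 ω) + (a*c'+a'*c) * (X ω * N2 ω))
      + ((a*d'+a'*d) * (X ω * N3 ω) + (b*c'+b'*c) * (N1 ω * N2 ω))) μ := kB1.add kB2
  have kB4 : Integrable (fun ω => (b*d'+b'*d) * (N1 ω * N3 ω) + (c*d'+c'*d) * (N2 ω * N3 ω)) μ :=
    j13.add j23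
  have kB : Integrable (fun ω => (((a*b'+a'*b) * (X ω * N1 ω) + (a*c'+a'*c) * (X ω * N2 ω))
      + ((a*d'+a'*d) * (X ω * N3 ω) + (b*c'+b'*c) * (N1 ω * N2 ω)))
      + ((b*d'+b'*d) * (N1 ω * N3 ω) + (c*d'+c'*d) * (N2 ω * N3 ω))) μ := kB3.add kB4
  rw [key]
  simp only [integral_add kA kB, integral_add kA1 kA2, integral_add jXX j11,
    integral_add j22 j33, integral_add kB3 kB4, integral_add kB1 kB2,
    integral_add j01 j02, integral_add j03 j12, integral_add j13 j23,
    integral_const_mul]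
  rw [hmX, hm1, hm2, hm3, h01, h02, h03, h12, h13, h23]
  ring


set_option maxHeartbeats 2000000 in
/-- Successive quantization with quantization splitting via ECDQ (additive-noise model):
the second-moment matrix of `(X, W̃₁, W̃₂, W'₂, Δ)` equals that of
`(X, U₁, U₂, U'₂, U₂ − b₆* U'₂)` in the Gaussian scheme; in particular the listed
second moments hold. -/
theorem quantization_splitting_second_moments
    {Ω : Type*} [MeasurableSpace Ω] (μ : Measure Ω) [IsProbabilityMeasure μ]
    (σ2 D1 D2 D3 s0 s1 s2 s3 : ℝ)
    (hσ : 0 < σ2)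
    (hD3pos : 0 < D3) (hD3leD1 : D3 ≤ D1) (hD1 : D1 < σ2)
    (hD3leD2 : D3 ≤ D2) (hD2 : D2 < σ2)
    (hs0 : s0 = D3 * σ2 / (σ2 - D3))
    (hs1 : s1 = D1 * σ2 / (σ2 - D1) - s0)
    (hs2 : s2 = D2 * σ2 / (σ2 - D2) - s0)
    (hs3 : 0 ≤ s3)
    (hpos : 0 < s0 * (Real.sqrt s1 + Real.sqrt s2) ^ 2 + s3 * (s0 + s1))
    (b3 b4 b5 b6 b7 b8 bs1 bs2 bs3 bs4 bs5 bs6 v3 : ℝ)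
    (hb3 : b3 = σ2 / (σ2 + s0 + s2 + s3))
    (hb4 : b4 = (σ2 + s0 - Real.sqrt s1 * Real.sqrt s2) / (σ2 + s0 + s2 + s3))
    (hb5 : b5 = (s2 + s3 + Real.sqrt s1 * Real.sqrt s2) / (s0 + s2 + s3))
    (hb6 : b6 = (σ2 + s0 + s2) / (σ2 + s0 + s2 + s3))
    (hb7 : b7 = s3 / (s0 + s2 + s3))
    (hb8 : b8 = s3 * (s0 - Real.sqrt s1 * Real.sqrt s2) /
      (s0 * (Real.sqrt s1 + Real.sqrt s2) ^ 2 + s3 * (s0 + s1)))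
    (hbs1 : bs1 = (s2 + s3 + Real.sqrt s1 * Real.sqrt s2) / (s0 + s2 + s3))
    (hbs2 : bs2 = (s0 - Real.sqrt s1 * Real.sqrt s2) / (s0 + s2 + s3))
    (hbs3 : bs3 = b7 - b5 * b8)
    (hbs4 : bs4 = b8)
    (hbs5 : bs5 = b3 * b5 * b8 - b3 * b7 - b4 * b8)
    (hbs6 : bs6 = b6)
    (hv3 : v3 = s3 * (σ2 + s0 + s2) / (σ2 + s0 + s2 + s3)
      - σ2 * s3 ^ 2 / ((σ2 + s0 + s2 + s3) * (s0 + s2 + s3))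
      - s3 ^ 2 * (s0 - Real.sqrt s1 * Real.sqrt s2) ^ 2 /
        ((s0 * (Real.sqrt s1 + Real.sqrt s2) ^ 2 + s3 * (s0 + s1)) * (s0 + s2 + s3)))
    (X N1 N2 N3 : Ω → ℝ)
    (hX2 : MemLp X 2 μ) (hN12 : MemLp N1 2 μ) (hN22 : MemLp N2 2 μ) (hN32 : MemLp N3 2 μ)
    (hXmean : ∫ ω, X ω ∂μ = 0) (hN1mean : ∫ ω, N1 ω ∂μ = 0)
    (hN2mean : ∫ ω, N2 ω ∂μ = 0) (hN3mean : ∫ ω, N3 ω ∂μ = 0)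
    (hXvar : ∫ ω, (X ω) ^ 2 ∂μ = σ2)
    (hN1var : ∫ ω, (N1 ω) ^ 2 ∂μ = s0 + s2 + s3)
    (hN2var : ∫ ω, (N2 ω) ^ 2 ∂μ
      = (s0 * (Real.sqrt s1 + Real.sqrt s2) ^ 2 + s3 * (s0 + s1)) / (s0 + s2 + s3))
    (hN3var : ∫ ω, (N3 ω) ^ 2 ∂μ = v3)
    -- `X, N1, N2, N3` are mutually independent
    (hIndep1 : IndepFun X N1 μ)
    (hIndep2 : IndepFun (fun ω => (X ω, N1 ω)) N2 μ)
    (hIndep3 : IndepFun (fun ω => (X ω, N1 ω, N2 ω)) N3 μ)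
    (W2' Wt1 Δ Wt2 : Ω → ℝ)
    (hW2' : W2' = fun ω => X ω + N1 ω)
    (hWt1 : Wt1 = fun ω => bs1 * X ω + bs2 * W2' ω + N2 ω)
    (hΔ : Δ = fun ω => bs3 * X ω + bs4 * Wt1 ω + bs5 * W2' ω + N3 ω)
    (hWt2 : Wt2 = fun ω => Δ ω + bs6 * W2' ω) :
    (∫ ω, X ω * Wt1 ω ∂μ = σ2) ∧ (∫ ω, X ω * Wt2 ω ∂μ = σ2) ∧
    (∫ ω, (Wt1 ω) ^ 2 ∂μ = σ2 + s0 + s1) ∧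
    (∫ ω, (Wt2 ω) ^ 2 ∂μ = σ2 + s0 + s2) ∧
    (∫ ω, Wt1 ω * Wt2 ω ∂μ = σ2 + s0 - Real.sqrt s1 * Real.sqrt s2) ∧
    (∫ ω, (W2' ω) ^ 2 ∂μ = σ2 + s0 + s2 + s3) ∧
    (∫ ω, W2' ω * Wt1 ω ∂μ = σ2 + s0 - Real.sqrt s1 * Real.sqrt s2) ∧
    (∫ ω, W2' ω * Wt2 ω ∂μ = σ2 + s0 + s2) := by
  have hXi : Integrable X μ := hX2.integrable (by norm_num)
  have hN1i : Integrable N1 μ := hN12.integrable (by norm_num)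
  have hN2i : Integrable N2 μ := hN22.integrable (by norm_num)
  have hN3i : Integrable N3 μ := hN32.integrable (by norm_num)
  have hIXN2 : IndepFun X N2 μ := hIndep2.comp measurable_fst measurable_id
  have hIN1N2 : IndepFun N1 N2 μ := hIndep2.comp measurable_snd measurable_id
  have hIXN3 : IndepFun X N3 μ := hIndep3.comp measurable_fst measurable_id
  have hIN1N3 : IndepFun N1 N3 μ :=
    hIndep3.comp (measurable_fst.comp measurable_snd) measurable_id
  have hIN2N3 : IndepFun N2 N3 μ :=
    hIndep3.comp (measurable_snd.comp measurable_snd) measurable_id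
  have h01 : ∫ ω, X ω * N1 ω ∂μ = 0 := by
    calc ∫ ω, X ω * N1 ω ∂μ = (∫ ω, X ω ∂μ) * ∫ ω, N1 ω ∂μ :=
          hIndep1.integral_fun_mul_eq_mul_integral hXi.aestronglyMeasurable hN1i.aestronglyMeasurable
      _ = 0 := by rw [hXmean, hN1mean, mul_zero]
  have h02 : ∫ ω, X ω * N2 ω ∂μ = 0 := by
    calc ∫ ω, X ω * N2 ω ∂μ = (∫ ω, X ω ∂μ) * ∫ ω, N2 ω ∂μ :=
          hIXN2.integral_fun_mul_eq_mul_integral hXi.aestronglyMeasurable hN2i.aestronglyMeasurable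
      _ = 0 := by rw [hXmean, hN2mean, mul_zero]
  have h03 : ∫ ω, X ω * N3 ω ∂μ = 0 := by
    calc ∫ ω, X ω * N3 ω ∂μ = (∫ ω, X ω ∂μ) * ∫ ω, N3 ω ∂μ :=
          hIXN3.integral_fun_mul_eq_mul_integral hXi.aestronglyMeasurable hN3i.aestronglyMeasurable
      _ = 0 := by rw [hXmean, hN3mean, mul_zero]
  have h12 : ∫ ω, N1 ω * N2 ω ∂μ = 0 := by
    calc ∫ ω, N1 ω * N2 ω ∂μ = (∫ ω, N1 ω ∂μ) * ∫ ω, N2 ω ∂μ :=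
          hIN1N2.integral_fun_mul_eq_mul_integral hN1i.aestronglyMeasurable hN2i.aestronglyMeasurable
      _ = 0 := by rw [hN1mean, hN2mean, mul_zero]
  have h13 : ∫ ω, N1 ω * N3 ω ∂μ = 0 := by
    calc ∫ ω, N1 ω * N3 ω ∂μ = (∫ ω, N1 ω ∂μ) * ∫ ω, N3 ω ∂μ :=
          hIN1N3.integral_fun_mul_eq_mul_integral hN1i.aestronglyMeasurable hN3i.aestronglyMeasurable
      _ = 0 := by rw [hN1mean, hN3mean, mul_zero]
  have h23 : ∫ ω, N2 ω * N3 ω ∂μ = 0 := by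
    calc ∫ ω, N2 ω * N3 ω ∂μ = (∫ ω, N2 ω ∂μ) * ∫ ω, N3 ω ∂μ :=
          hIN2N3.integral_fun_mul_eq_mul_integral hN2i.aestronglyMeasurable hN3i.aestronglyMeasurable
      _ = 0 := by rw [hN2mean, hN3mean, mul_zero]
  have hσD1 : 0 < σ2 - D1 := by linarith
  have hσD2 : 0 < σ2 - D2 := by linarith
  have hσD3 : 0 < σ2 - D3 := by linarith
  have hs0pos : 0 < s0 := by rw [hs0]; exact div_pos (mul_pos hD3pos hσ) hσD3
  have hs1n : 0 ≤ s1 := by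
    rw [hs1, hs0, sub_nonneg, div_le_div_iff₀ hσD3 hσD1]
    have e : D1 * σ2 * (σ2 - D3) - D3 * σ2 * (σ2 - D1) = (D1 - D3) * (σ2 * σ2) := by ring
    linarith [mul_nonneg (sub_nonneg.mpr hD3leD1) (mul_nonneg hσ.le hσ.le), e]
  have hs2n : 0 ≤ s2 := by
    rw [hs2, hs0, sub_nonneg, div_le_div_iff₀ hσD3 hσD2]
    have e : D2 * σ2 * (σ2 - D3) - D3 * σ2 * (σ2 - D2) = (D2 - D3) * (σ2 * σ2) := by ring
    linarith [mul_nonneg (sub_nonneg.mpr hD3leD2) (mul_nonneg hσ.le hσ.le), e]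
  have hs1' : Real.sqrt s1 ^ 2 = s1 := Real.sq_sqrt hs1n
  have hs2' : Real.sqrt s2 ^ 2 = s2 := Real.sq_sqrt hs2n
  set t1 := Real.sqrt s1 with ht1d
  set t2 := Real.sqrt s2 with ht2d
  have hP : (0:ℝ) < s0 + s2 + s3 := by linarith
  have hQ : (0:ℝ) < σ2 + s0 + s2 + s3 := by linarith
  have hPt : s0 + t2 ^ 2 + s3 ≠ 0 := by rw [hs2']; exact hP.ne'
  have hQt : σ2 + s0 + t2 ^ 2 + s3 ≠ 0 := by rw [hs2']; exact hQ.ne'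
  have hRt : s0 * (t1 + t2) ^ 2 + s3 * (s0 + t1 ^ 2) ≠ 0 := by rw [hs1']; exact hpos.ne'
  have hPn : s0 + s2 + s3 ≠ 0 := hP.ne'
  have hQn : σ2 + s0 + s2 + s3 ≠ 0 := hQ.ne'
  have hRn : s0 * (t1 + t2) ^ 2 + s3 * (s0 + s1) ≠ 0 := hpos.ne'
  have f1 : bs1 + bs2 = 1 := by
    rw [hbs1, hbs2]; field_simp; ring
  have e1 : 1 - b4 = b5 * (1 - b3) := by
    rw [hb4, hb5, hb3]; field_simp; ring
  have e2 : b7 * (1 - b3) + b6 = 1 := by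
    rw [hb7, hb3, hb6]; field_simp; ring
  have f2 : bs3 + bs4 * (bs1 + bs2) + bs5 + bs6 = 1 := by
    rw [hbs3, hbs4, hbs5, hbs6, f1]
    linear_combination e2 + b8 * e1
  have e3 : bs2 - b4 = -(b3 * b5) := by
    rw [hbs2, hb4, hb3, hb5]; field_simp; ring
  have e4 : b6 - b3 * b7 = (s0 + s2) / (s0 + s2 + s3) := by
    rw [hb6, hb3, hb7]; field_simp; ring
  have f3 : bs4 * bs2 + bs5 + bs6 = (s0 + s2) / (s0 + s2 + s3) := by
    rw [hbs4, hbs5, hbs6]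
    linear_combination e4 + b8 * e3
  have g3 : bs2 ^ 2 * (s0 + s2 + s3)
      + (s0 * (t1 + t2) ^ 2 + s3 * (s0 + s1)) / (s0 + s2 + s3) = s0 + s1 := by
    rw [hbs2, ← hs1', ← hs2']; field_simp [hPt]; ring
  have e5 : b8 ^ 2 * ((s0 * (t1 + t2) ^ 2 + s3 * (s0 + s1)) / (s0 + s2 + s3))
      = s3 ^ 2 * (s0 - t1 * t2) ^ 2
        / ((s0 * (t1 + t2) ^ 2 + s3 * (s0 + s1)) * (s0 + s2 + s3)) := by
    rw [hb8]; field_simp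
  have e6 : (s0 + s2) / (s0 + s2 + s3) * ((s0 + s2) / (s0 + s2 + s3)) * (s0 + s2 + s3)
      + s3 * (σ2 + s0 + s2) / (σ2 + s0 + s2 + s3)
      - σ2 * s3 ^ 2 / ((σ2 + s0 + s2 + s3) * (s0 + s2 + s3)) = s0 + s2 := by
    field_simp; ring
  have e7 : bs2 * ((s0 + s2) / (s0 + s2 + s3)) * (s0 + s2 + s3)
      + b8 * ((s0 * (t1 + t2) ^ 2 + s3 * (s0 + s1)) / (s0 + s2 + s3)) = s0 - t1 * t2 := by
    rw [hbs2, hb8]; field_simp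
  have M := qsplit_moment4 hX2 hN12 hN22 hN32 hXvar hN1var hN2var hN3var
    h01 h02 h03 h12 h13 h23
  refine ⟨?_, ?_, ?_, ?_, ?_, ?_, ?_, ?_⟩
  · rw [show (fun ω => X ω * Wt1 ω)
        = (fun ω => (1 * X ω + 0 * N1 ω + 0 * N2 ω + 0 * N3 ω)
          * ((bs1 + bs2) * X ω + bs2 * N1 ω + 1 * N2 ω + 0 * N3 ω)) from by
        funext ω; simp only [hWt1, hW2']; ring,
      M, f1]
    ring
  · rw [show (fun ω => X ω * Wt2 ω)
        = (fun ω => (1 * X ω + 0 * N1 ω + 0 * N2 ω + 0 * N3 ω)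
          * ((bs3 + bs4 * (bs1 + bs2) + bs5 + bs6) * X ω
            + (bs4 * bs2 + bs5 + bs6) * N1 ω + bs4 * N2 ω + 1 * N3 ω)) from by
        funext ω; simp only [hWt2, hΔ, hWt1, hW2']; ring,
      M, f2]
    ring
  · rw [show (fun ω => (Wt1 ω) ^ 2)
        = (fun ω => ((bs1 + bs2) * X ω + bs2 * N1 ω + 1 * N2 ω + 0 * N3 ω)
          * ((bs1 + bs2) * X ω + bs2 * N1 ω + 1 * N2 ω + 0 * N3 ω)) from by
        funext ω; simp only [hWt1, hW2']; ring,
      M, f1]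
    linear_combination g3
  · rw [show (fun ω => (Wt2 ω) ^ 2)
        = (fun ω => ((bs3 + bs4 * (bs1 + bs2) + bs5 + bs6) * X ω
            + (bs4 * bs2 + bs5 + bs6) * N1 ω + bs4 * N2 ω + 1 * N3 ω)
          * ((bs3 + bs4 * (bs1 + bs2) + bs5 + bs6) * X ω
            + (bs4 * bs2 + bs5 + bs6) * N1 ω + bs4 * N2 ω + 1 * N3 ω)) from by
        funext ω; simp only [hWt2, hΔ, hWt1, hW2']; ring,
      M, f2, f3, hbs4, hv3]
    linear_combination e5 + e6
  · rw [show (fun ω => Wt1 ω * Wt2 ω)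
        = (fun ω => ((bs1 + bs2) * X ω + bs2 * N1 ω + 1 * N2 ω + 0 * N3 ω)
          * ((bs3 + bs4 * (bs1 + bs2) + bs5 + bs6) * X ω
            + (bs4 * bs2 + bs5 + bs6) * N1 ω + bs4 * N2 ω + 1 * N3 ω)) from by
        funext ω; simp only [hWt2, hΔ, hWt1, hW2']; ring,
      M, f2, f3, f1, hbs4]
    linear_combination e7
  · rw [show (fun ω => (W2' ω) ^ 2)
        = (fun ω => (1 * X ω + 1 * N1 ω + 0 * N2 ω + 0 * N3 ω)
          * (1 * X ω + 1 * N1 ω + 0 * N2 ω + 0 * N3 ω)) from by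
        funext ω; simp only [hW2']; ring,
      M]
    ring
  · rw [show (fun ω => W2' ω * Wt1 ω)
        = (fun ω => (1 * X ω + 1 * N1 ω + 0 * N2 ω + 0 * N3 ω)
          * ((bs1 + bs2) * X ω + bs2 * N1 ω + 1 * N2 ω + 0 * N3 ω)) from by
        funext ω; simp only [hWt1, hW2']; ring,
      M, f1, hbs2]
    field_simp
    ring
  · rw [show (fun ω => W2' ω * Wt2 ω)
        = (fun ω => (1 * X ω + 1 * N1 ω + 0 * N2 ω + 0 * N3 ω)
          * ((bs3 + bs4 * (bs1 + bs2) + bs5 + bs6) * X ω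
            + (bs4 * bs2 + bs5 + bs6) * N1 ω + bs4 * N2 ω + 1 * N3 ω)) from by
        funext ω; simp only [hWt2, hΔ, hWt1, hW2']; ring,
      M, f2, f3]
    field_simp
    ring
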